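/- Let S ⊆ ℤ \ {0} and let d > 0 divide every element of S, with S/d = {s/d : s ∈ S}. Then γ̄(ℤ, S/d) = γ̄(ℤ, S). -/

import Mathlib

open Filter

open scoped Classical in
noncomputable def lowerDensity (U : Set ℤ) : ℝ :=
  Filter.liminf (fun n : ℕ =>
    (((Finset.Icc (-(n:ℤ)) (n:ℤ)).filter (fun m => m ∈ U)).card : ℝ) / (2*(n:ℝ)+1))
    Filter.atTop

/-- `D` is a dominating set of the Cayley digraph `Γ(ℤ, S)`. -/
def IsDominating (S D : Set ℤ) : Prop :=
  ∀ v : ℤ, v ∈ D ∨ ∃ u ∈ D, ∃ s ∈ S, v = u + s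

/-- The domination ratio of `Γ(ℤ, S)`. -/
noncomputable def domRatio (S : Set ℤ) : ℝ :=
  sInf {x : ℝ | ∃ D : Set ℤ, IsDominating S D ∧ x = lowerDensity D}


open scoped Classical in
noncomputable def cnt (U : Set ℤ) (n : ℕ) : ℕ :=
  ((Finset.Icc (-(n:ℤ)) (n:ℤ)).filter (fun m => m ∈ U)).card

noncomputable def fseq (U : Set ℤ) (n : ℕ) : ℝ := (cnt U n : ℝ) / (2*(n:ℝ)+1)

lemma lowerDensity_eq (U : Set ℤ) : lowerDensity U = liminf (fseq U) atTop := rfl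

lemma cnt_mono (U : Set ℤ) {a b : ℕ} (h : a ≤ b) : cnt U a ≤ cnt U b := by
  classical
  simp only [cnt]
  exact Finset.card_le_card (Finset.filter_subset_filter _
    (Finset.Icc_subset_Icc (by exact_mod_cast neg_le_neg (Int.ofNat_le.mpr h))
      (by exact_mod_cast h)))

lemma cnt_le (U : Set ℤ) (n : ℕ) : (cnt U n : ℝ) ≤ 2*(n:ℝ)+1 := by
  classical
  have h : cnt U n ≤ 2*n+1 := by
    simp only [cnt]
    refine le_trans (Finset.card_filter_le _ _) ?_
    rw [Int.card_Icc]; omega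
  have h2 : ((cnt U n : ℕ) : ℝ) ≤ ((2*n+1 : ℕ) : ℝ) := Nat.cast_le.mpr h
  push_cast at h2; linarith

lemma fseq_nonneg (U : Set ℤ) (n : ℕ) : 0 ≤ fseq U n := by
  unfold fseq; positivity

lemma fseq_le_one (U : Set ℤ) (n : ℕ) : fseq U n ≤ 1 := by
  unfold fseq
  rw [div_le_one (by positivity)]
  exact cnt_le U n

lemma lowerDensity_nonneg (U : Set ℤ) : 0 ≤ lowerDensity U := by
  rw [lowerDensity_eq]
  exact le_liminf_of_le (isCoboundedUnder_ge_of_le _ (fseq_le_one U))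
    (Eventually.of_forall (fseq_nonneg U))

lemma key_ineq {a b c A B K ε : ℝ} (hc0 : 0 ≤ c) (hcA : c ≤ A)
    (hA : 0 < A) (hB : 0 < B) (hK : 0 ≤ K) (h : a*A ≤ b*B + K) (hKe : K ≤ ε * B) :
    a * (c/B) ≤ b * (c/A) + ε := by
  have h2 : a*c*A ≤ (b*c + ε*A)*B := by
    nlinarith [mul_le_mul_of_nonneg_right h hc0, mul_le_mul_of_nonneg_left hcA hK,
      mul_le_mul_of_nonneg_right hKe hA.le]
  calc a*(c/B) = (a*c)/B := by ring
    _ ≤ (b*c + ε*A)/A := (div_le_div_iff₀ hB hA).mpr h2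
    _ = b*(c/A) + ε := by
        rw [add_div, mul_div_assoc]
        congr 1
        exact mul_div_cancel_right₀ ε hA.ne'

lemma liminf_bridge {f g : ℕ → ℝ} {φ : ℕ → ℕ} {C : ℝ} (hC : 0 ≤ C)
    (hf1 : ∀ n, f n ≤ 1) (hg0 : ∀ n, 0 ≤ g n)
    (hφ : Tendsto φ atTop atTop)
    (h : ∀ ε : ℝ, 0 < ε → ∀ᶠ m in atTop, g (φ m) ≤ C * f m + ε) :
    liminf g atTop ≤ C * liminf f atTop := by
  set L := liminf f atTop with hL
  refine le_of_forall_pos_le_add fun ε hε => ?_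
  set δ := ε / (C + 2) with hδdef
  have hC2 : 0 < C + 2 := by linarith
  have hδ : 0 < δ := div_pos hε hC2
  have hcb : IsCoboundedUnder (· ≥ ·) (atTop : Filter ℕ) f := isCoboundedUnder_ge_of_le _ hf1
  have hfreq : ∃ᶠ m in atTop, f m < L + δ := frequently_lt_of_liminf_lt hcb (by linarith)
  have hcomb := hfreq.and_eventually (h δ hδ)
  have hδε : C * δ + δ ≤ ε := by
    have h2 : (C+2) * δ = ε := by rw [hδdef]; field_simp [hC2.ne']
    nlinarith
  have hkey : ∃ᶠ n in atTop, g n ≤ C * L + ε := by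
    rw [frequently_atTop]
    intro N
    obtain ⟨M, hM⟩ := (tendsto_atTop_atTop.mp hφ) N
    obtain ⟨m, hmM, hfm, hgm⟩ := frequently_atTop.mp hcomb M
    refine ⟨φ m, hM m hmM, ?_⟩
    have h3 : C * f m ≤ C * (L + δ) := mul_le_mul_of_nonneg_left hfm.le hC
    calc g (φ m) ≤ C * f m + δ := hgm
      _ ≤ C * (L + δ) + δ := by linarith
      _ = C*L + (C*δ + δ) := by ring
      _ ≤ C*L + ε := by linarith
  exact liminf_le_of_frequently_le hkey (isBoundedUnder_of ⟨0, hg0⟩)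

lemma liminf_add_ge {f g : ℕ → ℝ} {bf bg : ℝ} (hf0 : ∀ n, 0 ≤ f n) (hg0 : ∀ n, 0 ≤ g n)
    (hf1 : ∀ n, f n ≤ bf) (hg1 : ∀ n, g n ≤ bg) :
    liminf f atTop + liminf g atTop ≤ liminf (fun n => f n + g n) atTop := by
  refine le_of_forall_pos_le_add fun ε hε => ?_
  have hbf : IsBoundedUnder (· ≥ ·) (atTop : Filter ℕ) f := isBoundedUnder_of ⟨0, hf0⟩
  have hbg : IsBoundedUnder (· ≥ ·) (atTop : Filter ℕ) g := isBoundedUnder_of ⟨0, hg0⟩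
  have h1 : ∀ᶠ n in atTop, liminf f atTop - ε/2 < f n :=
    eventually_lt_of_lt_liminf (by linarith) hbf
  have h2 : ∀ᶠ n in atTop, liminf g atTop - ε/2 < g n :=
    eventually_lt_of_lt_liminf (by linarith) hbg
  have h3 : ∀ᶠ n in atTop, liminf f atTop + liminf g atTop - ε ≤ f n + g n :=
    (h1.and h2).mono fun n ⟨ha, hb⟩ => by linarith
  have hcb : IsCoboundedUnder (· ≥ ·) (atTop : Filter ℕ) (fun n => f n + g n) :=
    isCoboundedUnder_ge_of_le _ (fun n => add_le_add (hf1 n) (hg1 n))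
  have h4 := le_liminf_of_le hcb h3
  linarith

lemma liminf_sum_ge (k : ℕ) (F : ℕ → ℕ → ℝ) (h0 : ∀ r n, 0 ≤ F r n) (h1 : ∀ r n, F r n ≤ 1) :
    ∑ r ∈ Finset.range k, liminf (F r) atTop
      ≤ liminf (fun n => ∑ r ∈ Finset.range k, F r n) atTop := by
  induction k with
  | zero => simp [liminf_const]
  | succ k ih =>
      simp only [Finset.sum_range_succ]
      calc (∑ r ∈ Finset.range k, liminf (F r) atTop) + liminf (F k) atTop
          ≤ liminf (fun n => ∑ r ∈ Finset.range k, F r n) atTop + liminf (F k) atTop :=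
            add_le_add ih le_rfl
        _ ≤ liminf (fun n => (∑ r ∈ Finset.range k, F r n) + F k n) atTop := by
            refine liminf_add_ge (bf := k) (bg := 1)
              (fun n => Finset.sum_nonneg fun r _ => h0 r n) (h0 k)
              (fun n => ?_) (h1 k)
            calc ∑ r ∈ Finset.range k, F r n ≤ ∑ _r ∈ Finset.range k, (1:ℝ) :=
                  Finset.sum_le_sum fun r _ => h1 r n
              _ = k := by simp


lemma dom_scale_down (S D : Set ℤ) (d r : ℤ) (hdvd : ∀ s ∈ S, d ∣ s) (hD : IsDominating S D) :
    IsDominating {x | d*x ∈ S} {x | d*x + r ∈ D} := by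
  intro v
  rcases hD (d*v + r) with h | ⟨u, hu, s, hs, heq⟩
  · exact Or.inl h
  · obtain ⟨t, rfl⟩ := hdvd s hs
    refine Or.inr ⟨v - t, ?_, t, hs, by ring⟩
    show d*(v-t) + r ∈ D
    have h2 : d*(v-t)+r = u := by rw [mul_sub]; linarith
    exact h2 ▸ hu

lemma dom_scale_up (S D : Set ℤ) (d : ℤ) (hd : 0 < d)
    (hD : IsDominating {x | d*x ∈ S} D) :
    IsDominating S {y | ∃ x ∈ D, ∃ r : ℤ, 0 ≤ r ∧ r < d ∧ y = d*x + r} := by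
  intro v
  have hr0 : 0 ≤ v % d := Int.emod_nonneg v (ne_of_gt hd)
  have hrd : v % d < d := Int.emod_lt_of_pos v hd
  have hv : v = d*(v/d) + v % d := (Int.mul_ediv_add_emod v d).symm
  rcases hD (v/d) with h | ⟨u, hu, t, ht, heq⟩
  · exact Or.inl ⟨v/d, h, v % d, hr0, hrd, hv⟩
  · refine Or.inr ⟨d*u + v % d, ⟨u, hu, v % d, hr0, hrd, rfl⟩, d*t, ht, ?_⟩
    calc v = d*(v/d) + v % d := hv
      _ = d*(u+t) + v % d := by rw [heq]
      _ = (d*u + v % d) + d*t := by ring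

lemma countA (D : Set ℤ) (d : ℤ) (e n : ℕ) (he : (e:ℤ) = d) (he1 : 1 ≤ e) :
    ∑ r ∈ Finset.range e, cnt {x | d*x + (r:ℤ) ∈ D} n ≤ cnt D (e*n + e - 1) := by
  classical
  subst he
  have hd' : (0:ℤ) < (e:ℤ) := by exact_mod_cast he1
  set M : ℕ := e*n + e - 1 with hMdef
  have hM : (M:ℤ) = (e:ℤ)*n + e - 1 := by
    rw [hMdef, Nat.cast_sub (by nlinarith)]
    push_cast; ring
  set B : ℕ → Finset ℤ := fun r =>
    ((Finset.Icc (-(n:ℤ)) (n:ℤ)).filter (fun x => (e:ℤ)*x + (r:ℤ) ∈ D)).image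
      (fun x => (e:ℤ)*x + (r:ℤ)) with hB
  have hinj : ∀ r : ℕ, Function.Injective (fun x : ℤ => (e:ℤ)*x + (r:ℤ)) := by
    intro r x y hxy
    simp only at hxy
    exact mul_left_cancel₀ hd'.ne' (by linarith)
  have hcardB : ∀ r : ℕ, (B r).card = cnt {x | (e:ℤ)*x + (r:ℤ) ∈ D} n := by
    intro r
    rw [hB]
    rw [Finset.card_image_of_injective _ (hinj r)]
    simp only [cnt, Set.mem_setOf_eq]
  have hdisj : ∀ r1 ∈ Finset.range e, ∀ r2 ∈ Finset.range e, r1 ≠ r2 →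
      Disjoint (B r1) (B r2) := by
    intro r1 h1 r2 h2 hne
    simp only [Finset.mem_range] at h1 h2
    rw [Finset.disjoint_left]
    intro a ha1 ha2
    simp only [hB, Finset.mem_image, Finset.mem_filter] at ha1 ha2
    obtain ⟨x, _, hx⟩ := ha1
    obtain ⟨y, _, hy⟩ := ha2
    apply hne
    have key : ∀ r : ℕ, r < e → ∀ z : ℤ, (e:ℤ)*z + r = a → (a % (e:ℤ)) = r := by
      intro r hr z hz
      rw [← hz, add_comm, Int.add_mul_emod_self_left]
      exact Int.emod_eq_of_lt (by positivity) (by exact_mod_cast hr)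
    have e1 := key r1 h1 x hx
    have e2 := key r2 h2 y hy
    have : ((r1:ℤ)) = (r2:ℤ) := by rw [← e1, ← e2]
    exact_mod_cast this
  have hsub : ∀ r ∈ Finset.range e,
      B r ⊆ (Finset.Icc (-(M:ℤ)) (M:ℤ)).filter (fun m => m ∈ D) := by
    intro r hr a ha
    simp only [Finset.mem_range] at hr
    simp only [hB, Finset.mem_image, Finset.mem_filter, Finset.mem_Icc] at ha ⊢
    obtain ⟨x, ⟨⟨hx1, hx2⟩, hxD⟩, rfl⟩ := ha
    have hm1 : (e:ℤ)*(-(n:ℤ)) ≤ (e:ℤ)*x := mul_le_mul_of_nonneg_left hx1 hd'.le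
    have hm2 : (e:ℤ)*x ≤ (e:ℤ)*(n:ℤ) := mul_le_mul_of_nonneg_left hx2 hd'.le
    have hrz : (r:ℤ) < (e:ℤ) := by exact_mod_cast hr
    have hr0 : (0:ℤ) ≤ r := by positivity
    refine ⟨⟨?_, ?_⟩, hxD⟩
    · rw [hM]; nlinarith
    · rw [hM]; nlinarith
  calc ∑ r ∈ Finset.range e, cnt {x | (e:ℤ)*x + (r:ℤ) ∈ D} n
      = ∑ r ∈ Finset.range e, (B r).card := by
        exact Finset.sum_congr rfl fun r _ => (hcardB r).symm
    _ = ((Finset.range e).biUnion B).card := (Finset.card_biUnion hdisj).symm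
    _ ≤ ((Finset.Icc (-(M:ℤ)) (M:ℤ)).filter (fun m => m ∈ D)).card :=
        Finset.card_le_card (Finset.biUnion_subset.mpr hsub)
    _ = cnt D M := rfl

lemma countB (D : Set ℤ) (d : ℤ) (e n : ℕ) (he : (e:ℤ) = d) (he1 : 1 ≤ e) :
    cnt {y | ∃ x ∈ D, ∃ r : ℤ, 0 ≤ r ∧ r < d ∧ y = d*x + r} n ≤ e * cnt D (n/e + 1) := by
  classical
  subst he
  have he0 : 0 < e := he1
  have hd' : (0:ℤ) < (e:ℤ) := by exact_mod_cast he1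
  set m : ℕ := n/e + 1 with hm
  have hnm : n < e * m := by
    have h1 : e * (n/e) + n % e = n := Nat.div_add_mod n e
    have h2 : n % e < e := Nat.mod_lt n he0
    have h3 : e * m = e * (n/e) + e := by rw [hm, Nat.mul_succ]
    calc n = e * (n/e) + n % e := h1.symm
      _ < e * (n/e) + e := by exact Nat.add_lt_add_left h2 _
      _ = e * m := h3.symm
  have hnmZ : (n:ℤ) < (e:ℤ) * m := by exact_mod_cast hnm
  simp only [cnt]
  apply Finset.card_le_mul_card_image_of_maps_to (f := fun y : ℤ => y / (e:ℤ))
  · -- maps to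
    intro y hy
    simp only [Finset.mem_filter, Finset.mem_Icc, Set.mem_setOf_eq] at hy ⊢
    obtain ⟨⟨hy1, hy2⟩, x, hxD, r, hr0, hrd, rfl⟩ := hy
    have hdiv : ((e:ℤ)*x + r) / (e:ℤ) = x := by
      rw [add_comm, Int.add_mul_ediv_left r x hd'.ne', Int.ediv_eq_zero_of_lt hr0 hrd,
        zero_add]
    rw [hdiv]
    refine ⟨⟨?_, ?_⟩, hxD⟩
    · -- -(m:ℤ) ≤ x
      by_contra hc
      push_neg at hc
      have hxle : x ≤ -(m:ℤ) - 1 := by omega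
      have := mul_le_mul_of_nonneg_left hxle hd'.le
      nlinarith
    · -- x ≤ m
      have : (e:ℤ)*x < (e:ℤ)*m := by nlinarith
      exact (lt_of_mul_lt_mul_left this hd'.le).le
  · -- fibers
    intro b hb
    have hsub : (Finset.filter (fun y : ℤ => y / (e:ℤ) = b)
        ((Finset.Icc (-(n:ℤ)) (n:ℤ)).filter
          (fun y => y ∈ {y | ∃ x ∈ D, ∃ r : ℤ, 0 ≤ r ∧ r < (e:ℤ) ∧ y = (e:ℤ)*x + r})))
        ⊆ Finset.Icc ((e:ℤ)*b) ((e:ℤ)*b + (e:ℤ) - 1) := by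
      intro y hy
      simp only [Finset.mem_filter, Finset.mem_Icc] at hy ⊢
      obtain ⟨_, hyb⟩ := hy
      have h1 : (e:ℤ) * (y / (e:ℤ)) + y % (e:ℤ) = y := Int.mul_ediv_add_emod y (e:ℤ)
      have h2 : 0 ≤ y % (e:ℤ) := Int.emod_nonneg y hd'.ne'
      have h3 : y % (e:ℤ) < (e:ℤ) := Int.emod_lt_of_pos y hd'
      rw [hyb] at h1
      constructor <;> linarith
    refine le_trans (Finset.card_le_card hsub) ?_
    rw [Int.card_Icc]
    have h4 : ((e:ℤ)*b + (e:ℤ) - 1 + 1 - ((e:ℤ)*b)) = (e:ℤ) := by ring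
    rw [h4, Int.toNat_natCast]

lemma densA (S D : Set ℤ) (d : ℤ) (e : ℕ) (he : (e:ℤ) = d) (he1 : 1 ≤ e) :
    ∃ r : ℕ, lowerDensity {x | d*x + (r:ℤ) ∈ D} ≤ lowerDensity D := by
  have he0 : 0 < e := he1
  set F : ℕ → ℕ → ℝ := fun r => fseq {x | d*x + (r:ℤ) ∈ D} with hF
  set g : ℕ → ℝ := fun n => ∑ r ∈ Finset.range e, F r n with hg
  have hsum := liminf_sum_ge e F (fun r n => fseq_nonneg _ n) (fun r n => fseq_le_one _ n)
  have hφ : Tendsto (fun m => m/e - 1) atTop atTop := by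
    refine tendsto_atTop_atTop.mpr fun b => ⟨e*(b+2), fun m hm => ?_⟩
    have h1 : b+2 ≤ m/e := (Nat.le_div_iff_mul_le he0).mpr (by rw [mul_comm]; exact hm)
    omega
  have hbr : liminf g atTop ≤ (e:ℝ) * liminf (fseq D) atTop := by
    refine liminf_bridge (φ := fun m => m/e - 1) (by positivity) (fseq_le_one D)
      (fun n => Finset.sum_nonneg fun r _ => fseq_nonneg _ n) hφ ?_
    intro ε hε
    set Kc := ⌈3*(e:ℝ)/ε⌉₊ with hKc
    filter_upwards [eventually_ge_atTop (e*(Kc+2))] with m hm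
    set q := m/e with hq
    have hq2 : Kc + 2 ≤ q := (Nat.le_div_iff_mul_le he0).mpr (by rw [mul_comm]; exact hm)
    set n := q - 1 with hn
    have hn1 : n + 1 = q := by omega
    have hqm : e*q ≤ m := by
      rw [hq]
      calc e*(m/e) = (m/e)*e := mul_comm _ _
        _ ≤ m := Nat.div_mul_le_self m e
    have hmlt : m < e*q + e := by
      calc m = e*q + m%e := (Nat.div_add_mod m e).symm
        _ < e*q + e := Nat.add_lt_add_left (Nat.mod_lt _ he0) _
    have hqn : e*q = e*n + e := by rw [← hn1, Nat.mul_succ]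
    have hA1 : e*n + e - 1 ≤ m := le_trans (Nat.sub_le _ _) (hqn ▸ hqm)
    have hcount : (∑ r ∈ Finset.range e, cnt {x | d*x + (r:ℤ) ∈ D} n) ≤ cnt D m :=
      le_trans (countA D d e n he he1) (cnt_mono D hA1)
    have hnK : Kc ≤ n := by omega
    -- real facts
    have hcast1 : (e:ℝ)*(q:ℝ) = (e:ℝ)*(n:ℝ) + (e:ℝ) := by exact_mod_cast congrArg (Nat.cast (R := ℝ)) hqn
    have hcast2 : (m:ℝ) + 1 ≤ (e:ℝ)*(q:ℝ) + (e:ℝ) := by exact_mod_cast hmlt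
    have hid : (e:ℝ)*(2*(n:ℝ)+1) = 2*((e:ℝ)*(n:ℝ)) + (e:ℝ) := by ring
    have heR : (1:ℝ) ≤ (e:ℝ) := by exact_mod_cast he1
    have hreal : 1*(2*(m:ℝ)+1) ≤ (e:ℝ)*(2*(n:ℝ)+1) + (3*(e:ℝ)-1) := by
      rw [one_mul, hid]; linarith
    have hKe : (3*(e:ℝ)-1) ≤ ε * (2*(n:ℝ)+1) := by
      have hceil : 3*(e:ℝ)/ε ≤ (Kc:ℝ) := Nat.le_ceil _
      have h6 : 3*(e:ℝ) ≤ (Kc:ℝ) * ε := (div_le_iff₀ hε).mp hceil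
      have h7 : (Kc:ℝ) ≤ 2*(n:ℝ)+1 := by
        have h8 : (Kc:ℝ) ≤ (n:ℝ) := by exact_mod_cast hnK
        linarith
      nlinarith
    have hpos : (0:ℝ) < 2*(n:ℝ)+1 := by positivity
    have hposm : (0:ℝ) < 2*(m:ℝ)+1 := by positivity
    have hgn : g n = ((∑ r ∈ Finset.range e, cnt {x | d*x + (r:ℤ) ∈ D} n : ℕ) : ℝ)
        / (2*(n:ℝ)+1) := by
      simp only [hg, hF, fseq]
      rw [← Finset.sum_div]
      push_cast
      rfl
    calc g n ≤ (cnt D m : ℝ)/(2*(n:ℝ)+1) := by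
          rw [hgn]; gcongr
      _ = 1 * ((cnt D m : ℝ)/(2*(n:ℝ)+1)) := (one_mul _).symm
      _ ≤ (e:ℝ) * ((cnt D m : ℝ)/(2*(m:ℝ)+1)) + ε :=
          key_ineq (Nat.cast_nonneg _) (cnt_le D m) hposm hpos (by linarith) hreal hKe
      _ = (e:ℝ) * fseq D m + ε := rfl
  have hchain : ∑ r ∈ Finset.range e, liminf (F r) atTop
      ≤ (e:ℝ) * liminf (fseq D) atTop := le_trans hsum hbr
  by_contra hcon
  push_neg at hcon
  have h8 : ∑ r ∈ Finset.range e, liminf (fseq D) atTop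
      < ∑ r ∈ Finset.range e, liminf (F r) atTop := by
    refine Finset.sum_lt_sum_of_nonempty ⟨0, Finset.mem_range.mpr he0⟩ fun r _ => ?_
    have := hcon r
    rw [lowerDensity_eq, lowerDensity_eq] at this
    exact this
  rw [Finset.sum_const, Finset.card_range, nsmul_eq_mul] at h8
  linarith

lemma densB (S D : Set ℤ) (d : ℤ) (e : ℕ) (he : (e:ℤ) = d) (he1 : 1 ≤ e) :
    lowerDensity {y | ∃ x ∈ D, ∃ r : ℤ, 0 ≤ r ∧ r < d ∧ y = d*x + r} ≤ lowerDensity D := by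
  have he0 : 0 < e := he1
  set E : Set ℤ := {y | ∃ x ∈ D, ∃ r : ℤ, 0 ≤ r ∧ r < d ∧ y = d*x + r} with hE
  have hφ : Tendsto (fun m => e*(m-1)) atTop atTop := by
    refine tendsto_atTop_atTop.mpr fun b => ⟨b+1, fun m hm => ?_⟩
    calc b ≤ m - 1 := by omega
      _ ≤ e*(m-1) := Nat.le_mul_of_pos_left _ he0
  have hbr : liminf (fseq E) atTop ≤ (1:ℝ) * liminf (fseq D) atTop := by
    refine liminf_bridge (φ := fun m => e*(m-1)) zero_le_one (fseq_le_one D)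
      (fseq_nonneg E) hφ ?_
    intro ε hε
    set Kc := ⌈3*(e:ℝ)/ε⌉₊ with hKc
    filter_upwards [eventually_ge_atTop (Kc+1)] with m hm
    set m' := m - 1 with hm'
    have hm1 : m' + 1 = m := by omega
    set n := e*m' with hn
    have hdiv : n/e + 1 = m := by rw [hn, Nat.mul_div_cancel_left m' he0]; omega
    have hcount : cnt E n ≤ e * cnt D m := by
      have h0 := countB D d e n he he1
      rw [hdiv] at h0
      exact h0
    have hnK : Kc ≤ n := le_trans (by omega) (hn ▸ Nat.le_mul_of_pos_left m' he0)
    have hceq : (n:ℝ) = (e:ℝ)*(m':ℝ) := by exact_mod_cast congrArg (Nat.cast (R := ℝ)) hn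
    have hceq2 : (m:ℝ) = (m':ℝ) + 1 := by exact_mod_cast hm1.symm
    have hid : (e:ℝ)*(2*(m:ℝ)+1) ≤ 1*(2*(n:ℝ)+1) + (3*(e:ℝ)-1) := by
      apply le_of_eq
      rw [hceq, hceq2]; ring
    have heR : (1:ℝ) ≤ (e:ℝ) := by exact_mod_cast he1
    have hKe : (3*(e:ℝ)-1) ≤ ε * (2*(n:ℝ)+1) := by
      have hceil : 3*(e:ℝ)/ε ≤ (Kc:ℝ) := Nat.le_ceil _
      have h6 : 3*(e:ℝ) ≤ (Kc:ℝ) * ε := (div_le_iff₀ hε).mp hceil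
      have h7 : (Kc:ℝ) ≤ 2*(n:ℝ)+1 := by
        have h8 : (Kc:ℝ) ≤ (n:ℝ) := by exact_mod_cast hnK
        linarith
      nlinarith
    have hpos : (0:ℝ) < 2*(n:ℝ)+1 := by positivity
    have hposm : (0:ℝ) < 2*(m:ℝ)+1 := by positivity
    calc fseq E n = (cnt E n : ℝ)/(2*(n:ℝ)+1) := rfl
      _ ≤ ((e * cnt D m : ℕ) : ℝ)/(2*(n:ℝ)+1) := by gcongr
      _ = (e:ℝ) * ((cnt D m : ℝ)/(2*(n:ℝ)+1)) := by push_cast; ring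
      _ ≤ 1 * ((cnt D m : ℝ)/(2*(m:ℝ)+1)) + ε :=
          key_ineq (Nat.cast_nonneg _) (cnt_le D m) hposm hpos (by linarith) hid hKe
      _ = 1 * fseq D m + ε := rfl
  rw [lowerDensity_eq, lowerDensity_eq]
  calc liminf (fseq E) atTop ≤ 1 * liminf (fseq D) atTop := hbr
    _ = liminf (fseq D) atTop := one_mul _


theorem stmt_11 (S : Set ℤ) (hS : 0 ∉ S) (d : ℤ) (hd : 0 < d)
    (hdvd : ∀ s ∈ S, d ∣ s) :
    domRatio {x : ℤ | d * x ∈ S} = domRatio S := by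
  have he : ((d.toNat : ℤ)) = d := Int.toNat_of_nonneg hd.le
  set e := d.toNat with hedef
  have he1 : 1 ≤ e := by omega
  unfold domRatio
  set A := {x : ℝ | ∃ D, IsDominating {x : ℤ | d * x ∈ S} D ∧ x = lowerDensity D} with hA
  set Bs := {x : ℝ | ∃ D, IsDominating S D ∧ x = lowerDensity D} with hBs
  have hUnivS : ∀ T : Set ℤ, IsDominating T Set.univ := fun T v => Or.inl trivial
  have hAne : A.Nonempty := ⟨lowerDensity Set.univ, Set.univ, hUnivS _, rfl⟩
  have hBne : Bs.Nonempty := ⟨lowerDensity Set.univ, Set.univ, hUnivS _, rfl⟩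
  have hAbd : BddBelow A := ⟨0, by rintro x ⟨D, _, rfl⟩; exact lowerDensity_nonneg D⟩
  have hBbd : BddBelow Bs := ⟨0, by rintro x ⟨D, _, rfl⟩; exact lowerDensity_nonneg D⟩
  apply le_antisymm
  · refine le_csInf hBne ?_
    rintro b ⟨D, hD, rfl⟩
    obtain ⟨r, hle⟩ := densA S D d e he he1
    refine le_trans (csInf_le hAbd ⟨{x | d*x + (r:ℤ) ∈ D},
      dom_scale_down S D d r hdvd hD, rfl⟩) hle
  · refine le_csInf hAne ?_
    rintro b ⟨D, hD, rfl⟩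
    exact le_trans (csInf_le hBbd ⟨_, dom_scale_up S D d hd hD, rfl⟩)
      (densB S D d e he he1)
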